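/- Let H be a critical, non-circular 3-hypergraph with |V(H)| ≥ 5, and let C be a component of 𝒫(H) of odd order at least 3, with isomorphism φ_C from P_{v(C)} onto C. Then φ_C is an isomorphism from C_3(U_{v(C)}) onto the induced subhypergraph H[V(C)]; in particular, E(H[V(C)]) = {φ_C(2i)φ_C(2j+1)φ_C(2k) : 0 ≤ i ≤ j < k ≤ (v(C)−1)/2}. -/

import Mathlib

/-- `M` is a module of the hypergraph with vertex set `verts` and edge set `edges`. -/
def IsModule {α : Type*} [DecidableEq α] (verts : Finset α) (edges : Set (Finset α))
    (M : Finset α) : Prop :=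
  M ⊆ verts ∧ ∀ e ∈ edges, (e ∩ M).Nonempty → (e \ M).Nonempty →
    ∃ m ∈ M, e ∩ M = {m} ∧ ∀ n ∈ M, (e \ {m}) ∪ {n} ∈ edges

/-- `(verts, edges)` is a hypergraph: edges are nonempty subsets of `verts`. -/
def IsHypergraph {α : Type*} (verts : Finset α) (edges : Set (Finset α)) : Prop :=
  ∀ e ∈ edges, e ⊆ verts ∧ e.Nonempty

/-- `(verts, edges)` is a 3-hypergraph: edges are 3-element subsets of `verts`. -/
def Is3Hypergraph {α : Type*} (verts : Finset α) (edges : Set (Finset α)) : Prop :=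
  ∀ e ∈ edges, e ⊆ verts ∧ e.card = 3

/-- Edges of the subhypergraph induced by `W`. -/
def induceEdges {α : Type*} (W : Finset α) (edges : Set (Finset α)) : Set (Finset α) :=
  {e ∈ edges | e ⊆ W}

/-- A hypergraph is prime if it has at least 3 vertices and all its modules are trivial. -/
def IsPrime {α : Type*} [DecidableEq α] (verts : Finset α) (edges : Set (Finset α)) : Prop :=
  3 ≤ verts.card ∧ ∀ M, IsModule verts edges M → M = ∅ ∨ M = verts ∨ ∃ v, M = {v}

/-- A prime hypergraph is critical if removing any vertex destroys primality. -/
def IsCritical {α : Type*} [DecidableEq α] (verts : Finset α) (edges : Set (Finset α)) : Prop :=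
  IsPrime verts edges ∧
    ∀ v ∈ verts, ¬ IsPrime (verts.erase v) (induceEdges (verts.erase v) edges)

/-- Adjacency in the primality graph: `v ≠ w` and `H - {v, w}` is prime. -/
def PrimAdj {α : Type*} [DecidableEq α] (verts : Finset α) (edges : Set (Finset α))
    (v w : α) : Prop :=
  v ≠ w ∧ v ∈ verts ∧ w ∈ verts ∧
    IsPrime (verts \ {v, w}) (induceEdges (verts \ {v, w}) edges)


/-- `(verts, arc)` is a tournament: the arc relation is irreflexive and, on distinct
vertices of `verts`, exactly one of `arc x y`, `arc y x` holds. -/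
def IsTournament {α : Type*} (verts : Finset α) (arc : α → α → Prop) : Prop :=
  (∀ x, ¬ arc x x) ∧ ∀ x ∈ verts, ∀ y ∈ verts, x ≠ y → (arc x y ↔ ¬ arc y x)

/-- `M` is a module of the tournament `(verts, arc)`. -/
def TournMod {α : Type*} (verts : Finset α) (arc : α → α → Prop) (M : Finset α) : Prop :=
  M ⊆ verts ∧ ∀ x ∈ M, ∀ y ∈ M, ∀ v ∈ verts, arc x v → arc v y → v ∈ M

/-- The edge set of the C₃-structure of a tournament: the 3-sets inducing a 3-cycle. -/
def c3Edges {α : Type*} [DecidableEq α] (verts : Finset α) (arc : α → α → Prop) :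
    Set (Finset α) :=
  {e | ∃ x y z, x ∈ verts ∧ y ∈ verts ∧ z ∈ verts ∧
    x ≠ y ∧ y ≠ z ∧ x ≠ z ∧ arc x y ∧ arc y z ∧ arc z x ∧ e = {x, y, z}}

/-- Arc relation of the tournament `T_p` on `{0, …, p-1}`: obtained from the transitive
tournament (arcs `i j` for `i < j`) by reversing all arcs between even and odd vertices. -/
def arcT (i j : ℕ) : Prop :=
  (i < j ∧ i % 2 = j % 2) ∨ (j < i ∧ i % 2 ≠ j % 2)

/-- A 3-hypergraph is circular if its order is odd and it is isomorphic to
`C₃(T_{v(H)})`. -/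
def IsCircular {α : Type*} [DecidableEq α] (verts : Finset α) (edges : Set (Finset α)) : Prop :=
  Odd verts.card ∧ ∃ f : α → ℕ, Set.InjOn f verts ∧
    verts.image f = Finset.range verts.card ∧
    ∀ e : Finset α, e ⊆ verts →
      (e ∈ edges ↔ e.image f ∈ c3Edges (Finset.range verts.card) arcT)

set_option linter.unusedSectionVars false
namespace OddPathU
variable {α : Type*} [DecidableEq α]

lemma induce_induce {W X : Finset α} {E : Set (Finset α)} (hXW : X ⊆ W) :
    induceEdges X (induceEdges W E) = induceEdges X E := by
  ext e
  simp only [induceEdges, Set.mem_setOf_eq]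
  exact ⟨fun h => ⟨h.1.1, h.2⟩, fun h => ⟨⟨h.1, h.2.trans hXW⟩, h.2⟩⟩

lemma module_restrict {W X M : Finset α} {E : Set (Finset α)} (hX : X ⊆ W)
    (hM : IsModule W E M) : IsModule X (induceEdges X E) (M ∩ X) := by
  constructor
  · exact Finset.inter_subset_right
  · rintro e ⟨heE, heX⟩ hne hdiff
    have hinter : e ∩ (M ∩ X) = e ∩ M := by
      ext x
      simp only [Finset.mem_inter]
      exact ⟨fun h => ⟨h.1, h.2.1⟩, fun h => ⟨h.1, h.2, heX h.1⟩⟩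
    have hdiff' : (e \ M).Nonempty := by
      by_contra hcon
      rw [Finset.not_nonempty_iff_eq_empty, Finset.sdiff_eq_empty_iff_subset] at hcon
      have : e \ (M ∩ X) = ∅ := by
        rw [Finset.sdiff_eq_empty_iff_subset]
        intro x hx; exact Finset.mem_inter.2 ⟨hcon hx, heX hx⟩
      rw [this] at hdiff; exact Finset.not_nonempty_empty hdiff
    obtain ⟨m, hmM, hsing, hswap⟩ := hM.2 e heE (by rw [← hinter]; exact hne) hdiff'
    have hmX : m ∈ X := heX (by have := hsing ▸ Finset.mem_singleton_self m; exact (Finset.mem_inter.1 this).1)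
    refine ⟨m, Finset.mem_inter.2 ⟨hmM, hmX⟩, by rw [hinter, hsing], ?_⟩
    intro n hn
    have hn' := Finset.mem_inter.1 hn
    refine ⟨hswap n hn'.1, ?_⟩
    intro x hx
    rcases Finset.mem_union.1 hx with hx | hx
    · exact heX (Finset.mem_sdiff.1 hx).1
    · rw [Finset.mem_singleton.1 hx]; exact hn'.2

lemma not_prime_nontrivial {W : Finset α} {E : Set (Finset α)} (hcard : 3 ≤ W.card)
    (hnp : ¬ IsPrime W E) :
    ∃ M, IsModule W E M ∧ M ≠ ∅ ∧ M ≠ W ∧ ∀ v, M ≠ {v} := by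
  unfold IsPrime at hnp
  push_neg at hnp
  obtain ⟨M, hM, h1, h2, h3⟩ := hnp hcard
  exact ⟨M, hM, h1.ne_empty, h2, h3⟩

/-- Generic swap facts for a 2-element module `{a, b}`. -/
lemma pair_module_no_both {W : Finset α} {E : Set (Finset α)} {a b : α}
    (hM : IsModule W E {a, b}) (hab : a ≠ b)
    {e : Finset α} (he : e ∈ E) (hcard : e.card = 3) (ha : a ∈ e) (hb : b ∈ e) : False := by
  have hne : (e ∩ ({a, b} : Finset α)).Nonempty :=
    ⟨a, Finset.mem_inter.2 ⟨ha, Finset.mem_insert_self a _⟩⟩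
  have hdiff : (e \ ({a, b} : Finset α)).Nonempty := by
    by_contra hcon
    rw [Finset.not_nonempty_iff_eq_empty, Finset.sdiff_eq_empty_iff_subset] at hcon
    have := Finset.card_le_card hcon
    have h2 : ({a, b} : Finset α).card ≤ 2 := Finset.card_insert_le _ _ |>.trans (by simp)
    omega
  obtain ⟨m, _, hsing, _⟩ := hM.2 e he hne hdiff
  have haa : a ∈ e ∩ ({a, b} : Finset α) := Finset.mem_inter.2 ⟨ha, by simp⟩
  have hbb : b ∈ e ∩ ({a, b} : Finset α) := Finset.mem_inter.2 ⟨hb, by simp⟩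
  rw [hsing] at haa hbb
  exact hab ((Finset.mem_singleton.1 haa).trans (Finset.mem_singleton.1 hbb).symm)

lemma pair_module_swap {W : Finset α} {E : Set (Finset α)} {a b : α}
    (hM : IsModule W E {a, b})
    {e : Finset α} (he : e ∈ E) (hcard : e.card = 3) (ha : a ∈ e) (hb : b ∉ e) :
    e \ {a} ∪ {b} ∈ E := by
  have hne : (e ∩ ({a, b} : Finset α)).Nonempty :=
    ⟨a, Finset.mem_inter.2 ⟨ha, Finset.mem_insert_self a _⟩⟩
  have hdiff : (e \ ({a, b} : Finset α)).Nonempty := by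
    by_contra hcon
    rw [Finset.not_nonempty_iff_eq_empty, Finset.sdiff_eq_empty_iff_subset] at hcon
    have := Finset.card_le_card hcon
    have h2 : ({a, b} : Finset α).card ≤ 2 := Finset.card_insert_le _ _ |>.trans (by simp)
    omega
  obtain ⟨m, hmM, hsing, hswap⟩ := hM.2 e he hne hdiff
  have hma : m = a := by
    have haa : a ∈ e ∩ ({a, b} : Finset α) := Finset.mem_inter.2 ⟨ha, by simp⟩
    rw [hsing] at haa
    exact (Finset.mem_singleton.1 haa).symm
  rw [hma] at hswap
  exact hswap b (by simp)

end OddPathU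
namespace OddPathU
variable {α : Type*} [DecidableEq α]

lemma mem_image_swap {q x : α} {s : Finset α} {a : α} :
    a ∈ s.image (Equiv.swap q x) ↔ Equiv.swap q x a ∈ s := by
  constructor
  · intro h
    obtain ⟨b, hb, hba⟩ := Finset.mem_image.1 h
    rw [← hba, Equiv.swap_apply_self]
    exact hb
  · intro h
    exact Finset.mem_image.2 ⟨_, h, by simp⟩

lemma image_swap_invol {q x : α} (s : Finset α) :
    (s.image (Equiv.swap q x)).image (Equiv.swap q x) = s := by
  ext a
  rw [mem_image_swap, mem_image_swap, Equiv.swap_apply_self]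

lemma image_swap_of_mem {q x : α} {e : Finset α} (hqx : q ≠ x) (hq : q ∈ e) (hx : x ∉ e) :
    e.image (Equiv.swap q x) = e \ {q} ∪ {x} := by
  ext a
  rw [mem_image_swap]
  by_cases haq : a = q
  · subst haq
    simp only [Equiv.swap_apply_left]
    simp [hx, hqx]
  · by_cases hax : a = x
    · subst hax
      simp only [Equiv.swap_apply_right]
      simp [hq]
    · rw [Equiv.swap_apply_of_ne_of_ne haq hax]
      simp [haq, hax]

lemma image_swap_of_not_mem {q x : α} {e : Finset α} (hq : q ∉ e) (hx : x ∉ e) :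
    e.image (Equiv.swap q x) = e := by
  ext a
  rw [mem_image_swap]
  by_cases haq : a = q
  · subst haq; simp only [Equiv.swap_apply_left]; simp [hq, hx]
  · by_cases hax : a = x
    · subst hax; simp only [Equiv.swap_apply_right]; simp [hq, hx]
    · rw [Equiv.swap_apply_of_ne_of_ne haq hax]

lemma card_sdiff_pair {verts : Finset α} {p q : α} (hp : p ∈ verts) (hq : q ∈ verts)
    (hpq : p ≠ q) : (verts \ {p, q}).card = verts.card - 2 := by
  rw [Finset.card_sdiff_of_subset]
  · congr 1
    rw [Finset.card_insert_of_notMem (by simp [hpq]), Finset.card_singleton]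
  · intro a ha
    rcases Finset.mem_insert.1 ha with rfl | ha
    · exact hp
    · rw [Finset.mem_singleton.1 ha]; exact hq

/-- Transport a nontrivial module of `H - {p,x}` through the swap `q ↔ x`
(an automorphism of `H - p` thanks to the pair module `{q,x}`),
obtaining a nontrivial module of the prime `H - {p,q}`: contradiction. -/
lemma swap_transport {verts : Finset α} {edges : Set (Finset α)}
    (h3 : Is3Hypergraph verts edges)
    {p q x : α} (hp : p ∈ verts) (hq : q ∈ verts) (hx : x ∈ verts)
    (hqx : q ≠ x) (hpq : p ≠ q) (hpx : p ≠ x)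
    (hM : IsModule (verts.erase p) (induceEdges (verts.erase p) edges) {q, x})
    (hprime : IsPrime (verts \ {p, q}) (induceEdges (verts \ {p, q}) edges))
    (hnp : ¬ IsPrime (verts \ {p, x}) (induceEdges (verts \ {p, x}) edges))
    (hcard : 5 ≤ verts.card) : False := by
  set σ := Equiv.swap q x with hσdef
  -- swap is an automorphism of H - p
  have hswapE : ∀ e ∈ edges, p ∉ e → e.image σ ∈ edges := by
    intro e he hpe
    have heV : e ⊆ verts := (h3 e he).1
    have hec : e.card = 3 := (h3 e he).2
    have heW : e ∈ induceEdges (verts.erase p) edges := by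
      refine ⟨he, ?_⟩
      intro a ha
      exact Finset.mem_erase.2 ⟨fun h => hpe (h ▸ ha), heV ha⟩
    by_cases hqe : q ∈ e
    · by_cases hxe : x ∈ e
      · exact (pair_module_no_both hM hqx heW hec hqe hxe).elim
      · rw [image_swap_of_mem hqx hqe hxe]
        exact (pair_module_swap hM heW hec hqe hxe).1
    · by_cases hxe : x ∈ e
      · rw [Equiv.swap_comm] at hσdef
        rw [hσdef, image_swap_of_mem (Ne.symm hqx) hxe hqe]
        have hM' : IsModule (verts.erase p) (induceEdges (verts.erase p) edges) {x, q} := by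
          rwa [Finset.pair_comm]
        exact (pair_module_swap hM' heW hec hxe hqe).1
      · rw [image_swap_of_not_mem hqe hxe]; exact he
  -- get nontrivial module of H - {p,x}
  have hc3 : 3 ≤ (verts \ {p, x}).card := by
    rw [card_sdiff_pair hp hx hpx]; omega
  obtain ⟨N, hN, hN0, hNfull, hNsing⟩ := not_prime_nontrivial hc3 hnp
  have hNsub : N ⊆ verts \ {p, x} := hN.1
  -- transported set
  set N' := N.image σ with hN'def
  have hσverts : ∀ a, a ∈ verts → σ a ∈ verts := by
    intro a ha
    by_cases haq : a = q
    · subst haq; rw [hσdef, Equiv.swap_apply_left]; exact hx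
    · by_cases hax : a = x
      · subst hax; rw [hσdef, Equiv.swap_apply_right]; exact hq
      · rw [hσdef, Equiv.swap_apply_of_ne_of_ne haq hax]; exact ha
  have hσp : σ p = p := by
    rw [hσdef, Equiv.swap_apply_of_ne_of_ne hpq hpx]
  have hN'sub : N' ⊆ verts \ {p, q} := by
    intro a ha
    obtain ⟨b, hb, hba⟩ := Finset.mem_image.1 ha
    have hb' := Finset.mem_sdiff.1 (hNsub hb)
    have hbv := hb'.1
    have hbp : b ≠ p := fun h => hb'.2 (by simp [h])
    have hbx : b ≠ x := fun h => hb'.2 (by simp [h])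
    refine Finset.mem_sdiff.2 ⟨hba ▸ hσverts b hbv, ?_⟩
    intro hmem
    have hbσ : b = σ a := by rw [← hba, Equiv.swap_apply_self]
    rcases Finset.mem_insert.1 hmem with h1 | h1
    · rw [h1, hσp] at hbσ
      exact hbp hbσ
    · rw [Finset.mem_singleton.1 h1] at hbσ
      rw [hσdef, Equiv.swap_apply_left] at hbσ
      exact hbx hbσ
  -- N' is a module of H - {p, q}
  have hN'mod : IsModule (verts \ {p, q}) (induceEdges (verts \ {p, q}) edges) N' := by
    refine ⟨hN'sub, ?_⟩
    rintro e ⟨heE, heW2⟩ hne hdiff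
    have hpe : p ∉ e := fun h => (Finset.mem_sdiff.1 (heW2 h)).2 (by simp)
    have hqe : q ∉ e := fun h => (Finset.mem_sdiff.1 (heW2 h)).2 (by simp)
    set f := e.image σ with hfdef
    have hfE : f ∈ edges := hswapE e heE hpe
    have hfW1 : f ⊆ verts \ {p, x} := by
      intro a ha
      have hσa : σ a ∈ e := mem_image_swap.1 ha
      have h1 := Finset.mem_sdiff.1 (heW2 hσa)
      have hav : a ∈ verts := by
        have := hσverts (σ a) h1.1
        rwa [Equiv.swap_apply_self] at this
      refine Finset.mem_sdiff.2 ⟨hav, ?_⟩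
      intro hmem
      rcases Finset.mem_insert.1 hmem with h2 | h2
      · rw [h2] at hσa
        rw [hσp] at hσa
        exact hpe hσa
      · rw [Finset.mem_singleton.1 h2] at hσa
        rw [hσdef, Equiv.swap_apply_right] at hσa
        exact hqe hσa
    have hmemN' : ∀ c, c ∈ N' ↔ σ c ∈ N := fun c => mem_image_swap
    have hmemf : ∀ c, c ∈ f ↔ σ c ∈ e := fun c => mem_image_swap
    have hfN_ne : (f ∩ N).Nonempty := by
      obtain ⟨c, hc⟩ := hne
      have hc' := Finset.mem_inter.1 hc
      exact ⟨σ c, Finset.mem_inter.2 ⟨(hmemf (σ c)).2 (by rw [Equiv.swap_apply_self]; exact hc'.1),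
        (hmemN' c).1 hc'.2⟩⟩
    have hfN_diff : (f \ N).Nonempty := by
      obtain ⟨c, hc⟩ := hdiff
      have hc' := Finset.mem_sdiff.1 hc
      refine ⟨σ c, Finset.mem_sdiff.2 ⟨(hmemf (σ c)).2 (by rw [Equiv.swap_apply_self]; exact hc'.1), ?_⟩⟩
      intro hcn
      exact hc'.2 ((hmemN' c).2 hcn)
    obtain ⟨n0, hn0N, hsing, hswap⟩ := hN.2 f ⟨hfE, hfW1⟩ hfN_ne hfN_diff
    refine ⟨σ n0, (hmemN' (σ n0)).2 (by rw [Equiv.swap_apply_self]; exact hn0N), ?_, ?_⟩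
    · ext c
      simp only [Finset.mem_inter, Finset.mem_singleton]
      constructor
      · rintro ⟨hce, hcN'⟩
        have : σ c ∈ f ∩ N := Finset.mem_inter.2 ⟨(hmemf (σ c)).2 (by rw [Equiv.swap_apply_self]; exact hce), (hmemN' c).1 hcN'⟩
        rw [hsing, Finset.mem_singleton] at this
        rw [← this, Equiv.swap_apply_self]
      · rintro rfl
        have hn0f : n0 ∈ f ∩ N := by rw [hsing]; simp
        have hn0f' := Finset.mem_inter.1 hn0f
        refine ⟨(hmemf n0).1 hn0f'.1, (hmemN' (σ n0)).2 ?_⟩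
        rw [Equiv.swap_apply_self]
        exact hn0f'.2
    · intro n' hn'
      have hnN : σ n' ∈ N := (hmemN' n').1 hn'
      obtain ⟨hgE, hgW1⟩ := hswap (σ n') hnN
      have hpg : p ∉ f \ {n0} ∪ {σ n'} := fun h => (Finset.mem_sdiff.1 (hgW1 h)).2 (by simp)
      have himg : (f \ {n0} ∪ {σ n'}).image σ ∈ edges := hswapE _ hgE hpg
      have hinj : Function.Injective (⇑σ) := Equiv.injective σ
      have heq : (f \ {n0} ∪ {σ n'}).image σ = e \ {σ n0} ∪ {n'} := by
        rw [Finset.image_union, Finset.image_sdiff _ _ hinj, Finset.image_singleton,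
          Finset.image_singleton, hfdef, image_swap_invol, Equiv.swap_apply_self]
      rw [heq] at himg
      refine ⟨himg, ?_⟩
      intro a ha
      rcases Finset.mem_union.1 ha with ha | ha
      · exact heW2 (Finset.mem_sdiff.1 ha).1
      · rw [Finset.mem_singleton.1 ha]; exact hN'sub hn'
  -- N' is nontrivial in the prime H - {p,q}: contradiction
  have hNim : N'.image σ = N := image_swap_invol N
  rcases hprime.2 N' hN'mod with h | h | h
  · rw [h] at hNim
    simp only [Finset.image_empty] at hNim
    exact hN0 hNim.symm
  · rw [h] at hNim
    have : (verts \ {p, q}).image σ = verts \ {p, x} := by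
      ext a
      rw [mem_image_swap]
      simp only [Finset.mem_sdiff, Finset.mem_insert, Finset.mem_singleton]
      constructor
      · rintro ⟨h1, h2⟩
        have hav : a ∈ verts := by
          have := hσverts (σ a) h1
          rwa [Equiv.swap_apply_self] at this
        refine ⟨hav, ?_⟩
        rintro (h3 | h3)
        · exact h2 (Or.inl (by rw [h3, hσp]))
        · refine h2 (Or.inr ?_)
          rw [h3]
          exact Equiv.swap_apply_right q x
      · rintro ⟨h1, h2⟩
        push_neg at h2
        refine ⟨hσverts a h1, ?_⟩
        rintro (h3 | h3)
        · have : σ (σ a) = σ p := by rw [h3]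
          rw [Equiv.swap_apply_self, hσp] at this
          exact h2.1 this
        · have : σ (σ a) = σ q := by rw [h3]
          rw [Equiv.swap_apply_self, hσdef, Equiv.swap_apply_left] at this
          exact h2.2 this
    rw [this] at hNim
    exact hNfull hNim.symm
  · obtain ⟨v, hv⟩ := h
    rw [hv] at hNim
    rw [Finset.image_singleton] at hNim
    exact hNsing (σ v) hNim.symm

end OddPathU
namespace OddPathU
variable {α : Type*} [DecidableEq α]

lemma mod_classify {verts : Finset α} {edges : Set (Finset α)} {v w : α}
    (hv : v ∈ verts) (hw : w ∈ verts) (hvw : v ≠ w)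
    (hprime : IsPrime (verts \ {v, w}) (induceEdges (verts \ {v, w}) edges))
    {M : Finset α} (hM : IsModule (verts.erase v) (induceEdges (verts.erase v) edges) M)
    (hM0 : M ≠ ∅) (hMfull : M ≠ verts.erase v) (hMsing : ∀ u, M ≠ {u}) :
    M = verts \ {v, w} ∨ ∃ x, x ∈ verts ∧ x ≠ v ∧ x ≠ w ∧ M = {w, x} := by
  have hXW : verts \ {v, w} ⊆ verts.erase v := by
    intro a ha
    have := Finset.mem_sdiff.1 ha
    exact Finset.mem_erase.2 ⟨fun h => this.2 (by simp [h]), this.1⟩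
  have hres := module_restrict (E := induceEdges (verts.erase v) edges) hXW hM
  rw [induce_induce hXW] at hres
  have hMW := hM.1
  rcases hprime.2 _ hres with h | h | h
  · -- M ∩ X = ∅ : M ⊆ {w}
    left
    exfalso
    have hsub : M ⊆ {w} := by
      intro a ha
      have haW := Finset.mem_erase.1 (hMW ha)
      by_contra haw
      rw [Finset.mem_singleton] at haw
      have : a ∈ M ∩ (verts \ {v, w}) :=
        Finset.mem_inter.2 ⟨ha, Finset.mem_sdiff.2 ⟨haW.2, by simp [haW.1, haw]⟩⟩
      rw [h] at this
      exact absurd this (Finset.notMem_empty a)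
    rcases Finset.subset_singleton_iff.1 hsub with h' | h'
    · exact hM0 h'
    · exact hMsing w h'
  · -- M ∩ X = X : X ⊆ M
    have hXM : verts \ {v, w} ⊆ M := by
      intro a ha
      rw [← h] at ha
      exact (Finset.mem_inter.1 ha).1
    by_cases hwM : w ∈ M
    · exfalso
      apply hMfull
      apply Finset.Subset.antisymm hMW
      intro a ha
      have ha' := Finset.mem_erase.1 ha
      by_cases haw : a = w
      · rw [haw]; exact hwM
      · exact hXM (Finset.mem_sdiff.2 ⟨ha'.2, by simp [ha'.1, haw]⟩)
    · left
      apply Finset.Subset.antisymm _ hXM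
      intro a ha
      have ha' := Finset.mem_erase.1 (hMW ha)
      refine Finset.mem_sdiff.2 ⟨ha'.2, ?_⟩
      intro hmem
      rcases Finset.mem_insert.1 hmem with h2 | h2
      · exact ha'.1 h2
      · rw [Finset.mem_singleton.1 h2] at ha
        exact hwM ha
  · -- M ∩ X = {x}
    obtain ⟨x, hx⟩ := h
    have hxM : x ∈ M ∧ x ∈ verts \ {v, w} := by
      have : x ∈ M ∩ (verts \ {v, w}) := by rw [hx]; simp
      exact Finset.mem_inter.1 this
    have hxV := Finset.mem_sdiff.1 hxM.2
    have hxv : x ≠ v := fun h => hxV.2 (by simp [h])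
    have hxw : x ≠ w := fun h => hxV.2 (by simp [h])
    right
    refine ⟨x, hxV.1, hxv, hxw, ?_⟩
    have hsub : M ⊆ {w, x} := by
      intro a ha
      have ha' := Finset.mem_erase.1 (hMW ha)
      by_cases haw : a = w
      · simp [haw]
      · have : a ∈ M ∩ (verts \ {v, w}) :=
          Finset.mem_inter.2 ⟨ha, Finset.mem_sdiff.2 ⟨ha'.2, by simp [ha'.1, haw]⟩⟩
        rw [hx, Finset.mem_singleton] at this
        simp [this]
    have hwM : w ∈ M := by
      by_contra hwM
      apply hMsing x
      apply Finset.Subset.antisymm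
      · intro a ha
        rcases Finset.mem_insert.1 (hsub ha) with h2 | h2
        · rw [h2] at ha; exact absurd ha hwM
        · exact h2
      · intro a ha
        rw [Finset.mem_singleton.1 ha]; exact hxM.1
    apply Finset.Subset.antisymm hsub
    intro a ha
    rcases Finset.mem_insert.1 ha with h2 | h2
    · rw [h2]; exact hwM
    · rw [Finset.mem_singleton.1 h2]; exact hxM.1

lemma interior_pair {verts : Finset α} {edges : Set (Finset α)} {v w1 w2 : α}
    (hv : v ∈ verts) (hw1 : w1 ∈ verts) (hw2 : w2 ∈ verts)
    (hvw1 : v ≠ w1) (hvw2 : v ≠ w2) (hw12 : w1 ≠ w2)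
    (hprime1 : IsPrime (verts \ {v, w1}) (induceEdges (verts \ {v, w1}) edges))
    (hprime2 : IsPrime (verts \ {v, w2}) (induceEdges (verts \ {v, w2}) edges))
    (hnp : ¬ IsPrime (verts.erase v) (induceEdges (verts.erase v) edges))
    (hcard : 5 ≤ verts.card) :
    IsModule (verts.erase v) (induceEdges (verts.erase v) edges) {w1, w2} := by
  have hc3 : 3 ≤ (verts.erase v).card := by
    rw [Finset.card_erase_of_mem hv]; omega
  obtain ⟨M, hM, hM0, hMfull, hMsing⟩ := not_prime_nontrivial hc3 hnp
  have hcop : ∀ u : α, u ∈ verts → v ≠ u → M ≠ verts \ {v, u} := by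
    intro u hu hvu hMeq
    have h1 : (verts \ {v, u}).card = verts.card - 2 := card_sdiff_pair hv hu hvu
    rcases mod_classify hv hw1 hvw1 hprime1 hM hM0 hMfull hMsing with h | ⟨x, _, _, _, hpair⟩
    · rcases mod_classify hv hw2 hvw2 hprime2 hM hM0 hMfull hMsing with h' | ⟨y, _, _, _, hpair'⟩
      · -- both copairs: w2 ∈ first, not second
        have hw2mem : w2 ∈ verts \ {v, w1} :=
          Finset.mem_sdiff.2 ⟨hw2, by simp [Ne.symm hvw2, Ne.symm hw12]⟩
        rw [← h, h'] at hw2mem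
        exact (Finset.mem_sdiff.1 hw2mem).2 (by simp)
      · -- copair = pair: cards differ
        have hcc : M.card = verts.card - 2 := by rw [h, card_sdiff_pair hv hw1 hvw1]
        have : M.card ≤ 2 := by rw [hpair']; exact Finset.card_insert_le _ _ |>.trans (by simp)
        omega
    · have hcc : M.card ≤ 2 := by rw [hpair]; exact Finset.card_insert_le _ _ |>.trans (by simp)
      rw [hMeq, h1] at hcc
      omega
  rcases mod_classify hv hw1 hvw1 hprime1 hM hM0 hMfull hMsing with h | ⟨x, hxv', hxv, hxw, hpair⟩
  · exact absurd h (hcop w1 hw1 hvw1)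
  rcases mod_classify hv hw2 hvw2 hprime2 hM hM0 hMfull hMsing with h' | ⟨y, hyv', hyv, hyw, hpair'⟩
  · exact absurd h' (hcop w2 hw2 hvw2)
  -- {w1, x} = {w2, y} : x = w2, so M = {w1, w2}
  have hxw2 : x = w2 := by
    have hw2M : w2 ∈ M := by rw [hpair']; simp
    rw [hpair] at hw2M
    rcases Finset.mem_insert.1 hw2M with h2 | h2
    · exact absurd h2.symm hw12
    · exact (Finset.mem_singleton.1 h2).symm
  rw [hxw2] at hpair
  rw [← hpair]
  exact hM

lemma end_edge_mem {verts : Finset α} {edges : Set (Finset α)}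
    (h3 : Is3Hypergraph verts edges) (hcrit : IsCritical verts edges) (hcard : 5 ≤ verts.card)
    {p q : α} (hp : p ∈ verts) (hq : q ∈ verts) (hpq : p ≠ q)
    (hadj : IsPrime (verts \ {p, q}) (induceEdges (verts \ {p, q}) edges))
    (honly : ∀ x, x ∈ verts → x ≠ p → x ≠ q →
      ¬ IsPrime (verts \ {p, x}) (induceEdges (verts \ {p, x}) edges)) :
    ∀ e ∈ edges, q ∈ e → p ∈ e := by
  have hnp := hcrit.2 p hp
  have hc3 : 3 ≤ (verts.erase p).card := by
    rw [Finset.card_erase_of_mem hp]; omega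
  obtain ⟨M, hM, hM0, hMfull, hMsing⟩ := not_prime_nontrivial hc3 hnp
  rcases mod_classify hp hq hpq hadj hM hM0 hMfull hMsing with h | ⟨x, hxv, hxp, hxq, hpair⟩
  · -- copair module: no edge contains q without p
    intro e he hqe
    by_contra hpe
    have heW : e ∈ induceEdges (verts.erase p) edges := by
      refine ⟨he, fun a ha => Finset.mem_erase.2 ⟨fun h' => hpe (h' ▸ ha), (h3 e he).1 ha⟩⟩
    have hec := (h3 e he).2
    have hinterEq : e ∩ M = e.erase q := by
      rw [h]
      ext a
      simp only [Finset.mem_inter, Finset.mem_sdiff, Finset.mem_erase, Finset.mem_insert,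
        Finset.mem_singleton]
      constructor
      · rintro ⟨h1, _, h2⟩
        push_neg at h2
        exact ⟨h2.2, h1⟩
      · rintro ⟨h1, h2⟩
        refine ⟨h2, (h3 e he).1 h2, ?_⟩
        rintro (h4 | h4)
        · exact hpe (h4 ▸ h2)
        · exact h1 h4
    have hcer : (e.erase q).card = 2 := by
      rw [Finset.card_erase_of_mem hqe, hec]
    have hne : (e ∩ M).Nonempty := by
      rw [hinterEq]
      rw [← Finset.card_pos, hcer]; omega
    have hdiff : (e \ M).Nonempty := by
      refine ⟨q, Finset.mem_sdiff.2 ⟨hqe, ?_⟩⟩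
      rw [h]
      intro hmem
      exact (Finset.mem_sdiff.1 hmem).2 (by simp)
    obtain ⟨m0, _, hsing, _⟩ := hM.2 e heW hne hdiff
    rw [hinterEq] at hsing
    have : (e.erase q).card = 1 := by rw [hsing]; simp
    omega
  · exact absurd (swap_transport h3 hp hq hxv (Ne.symm hxq) hpq (Ne.symm hxp)
      (hpair ▸ hM) hadj (honly x hxv hxp hxq) hcard) id

end OddPathU
namespace OddPathU
variable {α : Type*} [DecidableEq α]

lemma t12 (a b c : α) : ({a, b, c} : Finset α) = {b, a, c} := by
  ext x; simp only [Finset.mem_insert, Finset.mem_singleton]; tauto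

lemma t23 (a b c : α) : ({a, b, c} : Finset α) = {a, c, b} := by
  ext x; simp only [Finset.mem_insert, Finset.mem_singleton]; tauto

lemma sdiff_union_triple {a b c d : α} (hab : a ≠ b) (hac : a ≠ c) :
    ({a, b, c} : Finset α) \ {a} ∪ {d} = ({d, b, c} : Finset α) := by
  ext x
  simp only [Finset.mem_union, Finset.mem_sdiff, Finset.mem_insert, Finset.mem_singleton]
  constructor
  · rintro (⟨h1 | h1 | h1, h2⟩ | h)
    · exact absurd h1 h2
    · exact Or.inr (Or.inl h1)
    · exact Or.inr (Or.inr h1)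
    · exact Or.inl h
  · rintro (h | h | h)
    · exact Or.inr h
    · exact Or.inl ⟨Or.inr (Or.inl h), fun h2 => hab (h2 ▸ h ▸ rfl)⟩
    · exact Or.inl ⟨Or.inr (Or.inr h), fun h2 => hac (h2 ▸ h ▸ rfl)⟩

structure PC (verts : Finset α) (edges : Set (Finset α)) (m : ℕ) (φ : ℕ → α) : Prop where
  h3 : Is3Hypergraph verts edges
  hc : IsCritical verts edges
  h5 : 5 ≤ verts.card
  hinj : Set.InjOn φ (Set.Iio m)
  hsub : (Finset.range m).image φ ⊆ verts
  hpath : ∀ i < m, ∀ j < m, (PrimAdj verts edges (φ i) (φ j) ↔ (j = i + 1 ∨ i = j + 1))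
  hclosed : ∀ i < m, ∀ w, PrimAdj verts edges (φ i) w → ∃ j < m, w = φ j
  hm3 : 3 ≤ m
  hmodd : Odd m

variable {verts : Finset α} {edges : Set (Finset α)} {m : ℕ} {φ : ℕ → α}

lemma PC.mem (H : PC verts edges m φ) {i : ℕ} (hi : i < m) : φ i ∈ verts :=
  H.hsub (Finset.mem_image.2 ⟨i, Finset.mem_range.2 hi, rfl⟩)

lemma PC.ne (H : PC verts edges m φ) {i j : ℕ} (hi : i < m) (hj : j < m) (hij : i ≠ j) :
    φ i ≠ φ j := fun h => hij (H.hinj hi hj h)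

lemma PC.prime_consec (H : PC verts edges m φ) {i : ℕ} (h : i + 1 < m) :
    IsPrime (verts \ {φ i, φ (i + 1)}) (induceEdges (verts \ {φ i, φ (i + 1)}) edges) :=
  ((H.hpath i (by omega) (i + 1) h).2 (Or.inl rfl)).2.2.2

lemma PC.not_prime_pair (H : PC verts edges m φ) {i : ℕ} {w : α} (hi : i < m)
    (hw : w ∈ verts) (hwne : w ≠ φ i)
    (hnotnb : ∀ j, j < m → w = φ j → (j ≠ i + 1 ∧ i ≠ j + 1)) :
    ¬ IsPrime (verts \ {φ i, w}) (induceEdges (verts \ {φ i, w}) edges) := by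
  intro hp
  have hadj : PrimAdj verts edges (φ i) w := ⟨Ne.symm hwne, H.mem hi, hw, hp⟩
  obtain ⟨j, hj, rfl⟩ := H.hclosed i hi w hadj
  rcases (H.hpath i hi j hj).1 hadj with h | h
  · exact (hnotnb j hj rfl).1 h
  · exact (hnotnb j hj rfl).2 h

/-- every edge containing `φ 1` contains `φ 0`. -/
lemma PC.K1 (H : PC verts edges m φ) : ∀ e ∈ edges, φ 1 ∈ e → φ 0 ∈ e := by
  have hm := H.hm3
  have h0 : (0:ℕ) < m := by omega
  have h1 : (1:ℕ) < m := by omega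
  apply end_edge_mem H.h3 H.hc H.h5 (H.mem h0) (H.mem h1)
    (H.ne h0 h1 (by omega)) (H.prime_consec (by omega))
  intro x hx hxp hxq
  exact H.not_prime_pair h0 hx hxp (fun j hj hje => by
    constructor
    · intro h2; exact hxq (by rw [hje, h2])
    · omega)

/-- every edge containing `φ (m-2)` contains `φ (m-1)`. -/
lemma PC.K2 (H : PC verts edges m φ) : ∀ e ∈ edges, φ (m - 2) ∈ e → φ (m - 1) ∈ e := by
  have hm := H.hm3
  have h1 : m - 1 < m := by omega
  have h2 : m - 2 < m := by omega
  have hprime : IsPrime (verts \ {φ (m - 1), φ (m - 2)})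
      (induceEdges (verts \ {φ (m - 1), φ (m - 2)}) edges) := by
    have := H.prime_consec (i := m - 2) (by omega)
    have heq : m - 2 + 1 = m - 1 := by omega
    rw [heq] at this
    rwa [Finset.pair_comm (φ (m-1)) (φ (m-2))]
  apply end_edge_mem H.h3 H.hc H.h5 (H.mem h1) (H.mem h2)
    (H.ne h1 h2 (by omega)) hprime
  intro x hx hxp hxq
  exact H.not_prime_pair h1 hx hxp (fun j hj hje => by
    constructor
    · omega
    · intro h3
      exact hxq (by rw [hje]; congr 1; omega))

lemma PC.interior_mod (H : PC verts edges m φ) {i : ℕ} (h : i + 2 < m) :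
    IsModule (verts.erase (φ (i + 1))) (induceEdges (verts.erase (φ (i + 1))) edges)
      {φ i, φ (i + 2)} := by
  have h1 : IsPrime (verts \ {φ (i+1), φ i}) (induceEdges (verts \ {φ (i+1), φ i}) edges) := by
    have := H.prime_consec (i := i) (by omega)
    rwa [Finset.pair_comm (φ (i+1)) (φ i)]
  have h2 := H.prime_consec (i := i + 1) h
  exact interior_pair (H.mem (by omega)) (H.mem (by omega)) (H.mem (by omega))
    (H.ne (by omega) (by omega) (by omega)) (H.ne (by omega) (by omega) (by omega))
    (H.ne (by omega) (by omega) (by omega)) h1 h2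
    (H.hc.2 _ (H.mem (by omega))) H.h5

/-- no edge avoiding the pivot contains both `φ i` and `φ (i+2)`. -/
lemma PC.K3 (H : PC verts edges m φ) {i : ℕ} (h : i + 2 < m) {u : α}
    (hu1 : u ≠ φ (i + 1)) (he : ({φ i, φ (i + 2), u} : Finset α) ∈ edges) : False := by
  have hM := H.interior_mod h
  have hni : φ i ≠ φ (i+2) := H.ne (by omega) (by omega) (by omega)
  have hp1 : φ (i+1) ∉ ({φ i, φ (i + 2), u} : Finset α) := by
    simp only [Finset.mem_insert, Finset.mem_singleton]
    push_neg
    exact ⟨H.ne (by omega) (by omega) (by omega), H.ne (by omega) (by omega) (by omega),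
      Ne.symm hu1⟩
  have heW : ({φ i, φ (i + 2), u} : Finset α) ∈
      induceEdges (verts.erase (φ (i + 1))) edges := by
    refine ⟨he, fun a ha => Finset.mem_erase.2 ⟨fun h' => hp1 (h' ▸ ha), (H.h3 _ he).1 ha⟩⟩
  exact pair_module_no_both hM hni heW (H.h3 _ he).2 (by simp) (by simp)

/-- slide `φ i → φ (i+2)` in an edge avoiding the pivot `φ (i+1)`. -/
lemma PC.slide_up (H : PC verts edges m φ) {i : ℕ} (h : i + 2 < m) {u v : α}
    (hu1 : u ≠ φ (i + 1)) (hv1 : v ≠ φ (i + 1))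
    (hu2 : u ≠ φ (i + 2)) (hv2 : v ≠ φ (i + 2))
    (hui : u ≠ φ i) (hvi : v ≠ φ i)
    (he : ({φ i, u, v} : Finset α) ∈ edges) :
    ({φ (i + 2), u, v} : Finset α) ∈ edges := by
  have hM := H.interior_mod h
  have hp1 : φ (i+1) ∉ ({φ i, u, v} : Finset α) := by
    simp only [Finset.mem_insert, Finset.mem_singleton]
    push_neg
    exact ⟨H.ne (by omega) (by omega) (by omega), Ne.symm hu1, Ne.symm hv1⟩
  have heW : ({φ i, u, v} : Finset α) ∈ induceEdges (verts.erase (φ (i + 1))) edges :=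
    ⟨he, fun a ha => Finset.mem_erase.2 ⟨fun h' => hp1 (h' ▸ ha), (H.h3 _ he).1 ha⟩⟩
  have hswap := pair_module_swap hM heW (H.h3 _ he).2 (by simp)
    (by simp only [Finset.mem_insert, Finset.mem_singleton]; push_neg
        exact ⟨Ne.symm (H.ne (by omega) (by omega) (by omega)), Ne.symm hu2, Ne.symm hv2⟩)
  have heq := sdiff_union_triple (d := φ (i+2)) (Ne.symm hui) (Ne.symm hvi)
  rw [heq] at hswap
  exact hswap.1

/-- slide `φ (i+2) → φ i` in an edge avoiding the pivot `φ (i+1)`. -/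
lemma PC.slide_down (H : PC verts edges m φ) {i : ℕ} (h : i + 2 < m) {u v : α}
    (hu1 : u ≠ φ (i + 1)) (hv1 : v ≠ φ (i + 1))
    (hu2 : u ≠ φ (i + 2)) (hv2 : v ≠ φ (i + 2))
    (hui : u ≠ φ i) (hvi : v ≠ φ i)
    (he : ({φ (i + 2), u, v} : Finset α) ∈ edges) :
    ({φ i, u, v} : Finset α) ∈ edges := by
  have hM := H.interior_mod h
  rw [Finset.pair_comm] at hM
  have hp1 : φ (i+1) ∉ ({φ (i+2), u, v} : Finset α) := by
    simp only [Finset.mem_insert, Finset.mem_singleton]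
    push_neg
    exact ⟨H.ne (by omega) (by omega) (by omega), Ne.symm hu1, Ne.symm hv1⟩
  have heW : ({φ (i+2), u, v} : Finset α) ∈ induceEdges (verts.erase (φ (i + 1))) edges :=
    ⟨he, fun a ha => Finset.mem_erase.2 ⟨fun h' => hp1 (h' ▸ ha), (H.h3 _ he).1 ha⟩⟩
  have hswap := pair_module_swap hM heW (H.h3 _ he).2 (by simp)
    (by simp only [Finset.mem_insert, Finset.mem_singleton]; push_neg
        exact ⟨H.ne (by omega) (by omega) (by omega), Ne.symm hui, Ne.symm hvi⟩)
  have heq := sdiff_union_triple (d := φ i) (Ne.symm hu2) (Ne.symm hv2)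
  rw [heq] at hswap
  exact hswap.1

end OddPathU
namespace OddPathU
variable {α : Type*} [DecidableEq α]
variable {verts : Finset α} {edges : Set (Finset α)} {m : ℕ} {φ : ℕ → α}

lemma t13 (a b c : α) : ({a, b, c} : Finset α) = {c, a, b} := by
  rw [t23, t12]

lemma PC.kill_min_odd (H : PC verts edges m φ) :
    ∀ t y z, 2*t+1 < y → y < z → z < m →
      ({φ (2*t+1), φ y, φ z} : Finset α) ∈ edges → False := by
  intro t
  induction t with
  | zero =>
    intro y z h1 h2 h3 he
    have h0 := H.K1 _ he (by simp)
    simp only [Finset.mem_insert, Finset.mem_singleton] at h0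
    rcases h0 with h | h | h
    · exact H.ne (by omega) (by omega) (by omega) h
    · exact H.ne (by omega) (by omega) (by omega) h
    · exact H.ne (by omega) h3 (by omega) h
  | succ t ih =>
    intro y z h1 h2 h3 he
    have hidx : 2*(t+1)+1 = (2*t+1) + 2 := by omega
    rw [hidx] at he h1
    have he' := H.slide_down (i := 2*t+1) (by omega)
      (H.ne (by omega) (by omega) (by omega)) (H.ne (by omega) (by omega) (by omega))
      (H.ne (by omega) (by omega) (by omega)) (H.ne (by omega) (by omega) (by omega))
      (H.ne (by omega) (by omega) (by omega)) (H.ne (by omega) (by omega) (by omega)) he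
    exact ih y z (by omega) h2 h3 he'

lemma PC.kill_max_odd_aux (H : PC verts edges m φ) :
    ∀ d x y z, z + 2*d = m - 2 → x < y → y < z →
      ({φ x, φ y, φ z} : Finset α) ∈ edges → False := by
  have hm := H.hm3
  intro d
  induction d with
  | zero =>
    intro x y z hz h1 h2 he
    have hzm : z = m - 2 := by omega
    subst hzm
    have hzlt : m - 2 < m := by omega
    have h0 := H.K2 _ he (by simp)
    simp only [Finset.mem_insert, Finset.mem_singleton] at h0
    rcases h0 with h | h | h
    · exact H.ne (by omega) (by omega) (by omega) h
    · exact H.ne (by omega) (by omega) (by omega) h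
    · exact H.ne (by omega) (by omega) (by omega) h
  | succ d ih =>
    intro x y z hz h1 h2 he
    have hz2 : z + 2 < m := by omega
    rw [t13] at he
    have he' := H.slide_up (i := z) (by omega)
      (H.ne (by omega) (by omega) (by omega)) (H.ne (by omega) (by omega) (by omega))
      (H.ne (by omega) (by omega) (by omega)) (H.ne (by omega) (by omega) (by omega))
      (H.ne (by omega) (by omega) (by omega)) (H.ne (by omega) (by omega) (by omega)) he
    rw [← t13] at he'
    exact ih x y (z + 2) (by omega) (by omega) (by omega) he'

lemma PC.kill_max_odd (H : PC verts edges m φ) {x y z : ℕ} (hodd : Odd z) (hz : z < m)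
    (h1 : x < y) (h2 : y < z) (he : ({φ x, φ y, φ z} : Finset α) ∈ edges) : False := by
  have hm := H.hm3
  have hmodd := H.hmodd
  rw [Nat.odd_iff] at hodd hmodd
  obtain ⟨d, hd⟩ : ∃ d, z + 2*d = m - 2 := ⟨(m - 2 - z) / 2, by omega⟩
  exact H.kill_max_odd_aux d x y z hd h1 h2 he

lemma PC.kill_even_even_aux (H : PC verts edges m φ) :
    ∀ d x z, x + 2 + 2*d < z → z < m →
      ({φ x, φ (x + 2 + 2*d), φ z} : Finset α) ∈ edges → False := by
  intro d
  induction d with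
  | zero =>
    intro x z h1 h2 he
    have hx2 : x + 2 + 2*0 = x + 2 := by omega
    rw [hx2] at he h1
    exact H.K3 (by omega) (H.ne h2 (by omega) (by omega)) he
  | succ d ih =>
    intro x z h1 h2 he
    have hidx : x + 2 + 2*(d+1) = (x + 2 + 2*d) + 2 := by omega
    rw [hidx] at he h1
    rw [t12] at he
    have he' := H.slide_down (i := x + 2 + 2*d) (by omega)
      (H.ne (by omega) (by omega) (by omega)) (H.ne h2 (by omega) (by omega))
      (H.ne (by omega) (by omega) (by omega)) (H.ne h2 (by omega) (by omega))
      (H.ne (by omega) (by omega) (by omega)) (H.ne h2 (by omega) (by omega)) he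
    rw [← t12] at he'
    exact ih x z (by omega) h2 he'

lemma PC.kill_even_even (H : PC verts edges m φ) {x y z : ℕ} (hx : Even x) (hy : Even y)
    (h1 : x < y) (h2 : y < z) (hz : z < m)
    (he : ({φ x, φ y, φ z} : Finset α) ∈ edges) : False := by
  rw [Nat.even_iff] at hx hy
  obtain ⟨d, hd⟩ : ∃ d, y = x + 2 + 2*d := ⟨(y - x - 2) / 2, by omega⟩
  subst hd
  exact H.kill_even_even_aux d x z h2 hz he

/-- Negative direction: any edge inside the path has pattern even < odd < even. -/
lemma PC.neg (H : PC verts edges m φ) {x y z : ℕ} (h1 : x < y) (h2 : y < z) (hz : z < m)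
    (he : ({φ x, φ y, φ z} : Finset α) ∈ edges) : Even x ∧ Odd y ∧ Even z := by
  rcases Nat.even_or_odd x with hx | hx
  · rcases Nat.even_or_odd y with hy | hy
    · exact absurd (H.kill_even_even hx hy h1 h2 hz he) id
    · rcases Nat.even_or_odd z with hz' | hz'
      · exact ⟨hx, hy, hz'⟩
      · exact absurd (H.kill_max_odd hz' hz h1 h2 he) id
  · obtain ⟨t, ht⟩ := hx
    rw [ht] at he h1
    exact absurd (H.kill_min_odd t y z h1 h2 hz he) id
end OddPathU
namespace OddPathU
variable {α : Type*} [DecidableEq α]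
variable {verts : Finset α} {edges : Set (Finset α)} {m : ℕ} {φ : ℕ → α}

lemma third_elem {e : Finset α} (hec : e.card = 3) {a b : α} (ha : a ∈ e) (hb : b ∈ e)
    (hab : a ≠ b) : ∃ u, u ∈ e ∧ u ≠ a ∧ u ≠ b ∧ e = {a, b, u} := by
  have hsub : ({a, b} : Finset α) ⊆ e := by
    intro x hx
    rcases Finset.mem_insert.1 hx with h | h
    · rw [h]; exact ha
    · rw [Finset.mem_singleton.1 h]; exact hb
  have hcard2 : ({a, b} : Finset α).card = 2 := by
    rw [Finset.card_insert_of_notMem (by simp [hab]), Finset.card_singleton]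
  have hcard : (e \ {a, b}).card = 1 := by
    rw [Finset.card_sdiff_of_subset hsub, hec, hcard2]
  obtain ⟨u, hu⟩ := Finset.card_eq_one.1 hcard
  have huu : u ∈ e \ ({a, b} : Finset α) := by rw [hu]; simp
  have h1 := Finset.mem_sdiff.1 huu
  have hua : u ≠ a := fun h => h1.2 (by simp [h])
  have hub : u ≠ b := fun h => h1.2 (by simp [h])
  refine ⟨u, h1.1, hua, hub, ?_⟩
  refine (Finset.eq_of_subset_of_card_le ?_ ?_).symm
  · intro x hx
    rcases Finset.mem_insert.1 hx with h | hx
    · rw [h]; exact ha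
    · rcases Finset.mem_insert.1 hx with h | hx
      · rw [h]; exact hb
      · rw [Finset.mem_singleton.1 hx]; exact h1.1
  · rw [hec]
    rw [Finset.card_insert_of_notMem (by simp [hab, Ne.symm hua]),
      Finset.card_insert_of_notMem (by simp [Ne.symm hub]), Finset.card_singleton]

lemma PC.down_even (H : PC verts edges m φ) :
    ∀ d z, z = 2 + 2*d → z < m → ({φ 0, φ 1, φ z} : Finset α) ∈ edges →
      ({φ 0, φ 1, φ 2} : Finset α) ∈ edges := by
  intro d
  induction d with
  | zero => intro z hz _ he; rw [hz] at he; simpa using he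
  | succ d ih =>
    intro z hz hzm he
    rw [hz] at he hzm
    have hidx : 2 + 2*(d+1) = (2 + 2*d) + 2 := by omega
    rw [hidx] at he hzm
    rw [t13] at he
    have he' := H.slide_down (i := 2 + 2*d) (by omega)
      (H.ne (by omega) (by omega) (by omega)) (H.ne (by omega) (by omega) (by omega))
      (H.ne (by omega) (by omega) (by omega)) (H.ne (by omega) (by omega) (by omega))
      (H.ne (by omega) (by omega) (by omega)) (H.ne (by omega) (by omega) (by omega)) he
    rw [← t13] at he'
    exact ih (2 + 2*d) rfl (by omega) he'

lemma PC.kill_out (H : PC verts edges m φ) {u : α} (hu : ∀ j, j < m → u ≠ φ j) :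
    ∀ d z, z % 2 = 1 → z + 2*d = m - 2 →
      ({φ 0, φ z, u} : Finset α) ∈ edges → False := by
  have hm := H.hm3
  intro d
  induction d with
  | zero =>
    intro z hzo hz he
    have hzm : z = m - 2 := by omega
    subst hzm
    have h0 := H.K2 _ he (by simp)
    simp only [Finset.mem_insert, Finset.mem_singleton] at h0
    rcases h0 with h | h | h
    · exact H.ne (by omega) (by omega) (by omega) h.symm
    · exact H.ne (by omega) (by omega) (by omega) h.symm
    · exact hu (m-1) (by omega) h.symm
  | succ d ih =>
    intro z hzo hz he
    have hz2 : z + 2 < m := by omega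
    have hz0 : 0 < z := by omega
    rw [t12] at he
    have he' := H.slide_up (i := z) (by omega)
      (H.ne (by omega) (by omega) (by omega)) (hu (z+1) (by omega))
      (H.ne (by omega) (by omega) (by omega)) (hu (z+2) (by omega))
      (H.ne (by omega) (by omega) (by omega)) (hu z (by omega)) he
    rw [← t12] at he'
    exact ih (z+2) (by omega) (by omega) he'

/-- The base edge. -/
lemma PC.base (H : PC verts edges m φ) : ({φ 0, φ 1, φ 2} : Finset α) ∈ edges := by
  have hm := H.hm3
  have hmodd := H.hmodd
  rw [Nat.odd_iff] at hmodd
  by_contra h012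
  -- no edge contains φ 1
  have hno : ∀ e ∈ edges, φ 1 ∉ e := by
    intro e he h1e
    have h0e := H.K1 e he h1e
    obtain ⟨u, humem, hu0, hu1, heq⟩ := third_elem (H.h3 e he).2 h0e h1e
      (H.ne (by omega) (by omega) (by omega))
    subst heq
    by_cases hA : ∃ z, z < m ∧ u = φ z
    · obtain ⟨z, hz, rfl⟩ := hA
      have hz0 : z ≠ 0 := fun h => hu0 (by rw [h])
      have hz1 : z ≠ 1 := fun h => hu1 (by rw [h])
      rcases Nat.even_or_odd z with hze | hzo
      · rw [Nat.even_iff] at hze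
        obtain ⟨d, hd⟩ : ∃ d, z = 2 + 2*d := ⟨(z - 2)/2, by omega⟩
        exact h012 (H.down_even d z hd hz he)
      · exact H.kill_max_odd hzo hz (by omega) (by omega : 1 < z) he
    · push_neg at hA
      have hu' : ∀ j, j < m → u ≠ φ j := fun j hj h => (hA j hj) h
      have he1 : ({φ 0, φ 1, u} : Finset α) = {φ 0, φ 1, u} := rfl
      exact H.kill_out hu' ((m - 3)/2) 1 (by omega) (by omega) he
  -- then verts.erase (φ 1) is a nontrivial module of the prime H
  have h1m : (1:ℕ) < m := by omega
  have hmod : IsModule verts edges (verts.erase (φ 1)) := by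
    refine ⟨Finset.erase_subset _ _, ?_⟩
    intro e he hne hdiff
    exfalso
    obtain ⟨a, ha⟩ := hdiff
    have ha' := Finset.mem_sdiff.1 ha
    have hav : a ∈ verts := (H.h3 e he).1 ha'.1
    have haeq : a = φ 1 := by
      by_contra hne1
      exact ha'.2 (Finset.mem_erase.2 ⟨hne1, hav⟩)
    exact hno e he (haeq ▸ ha'.1)
  have hcard := Finset.card_erase_of_mem (H.mem h1m)
  have h5 := H.h5
  rcases H.hc.1.2 _ hmod with h | h | h
  · rw [h] at hcard; simp at hcard; omega
  · have : φ 1 ∉ verts.erase (φ 1) := Finset.notMem_erase _ _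
    rw [h] at this
    exact this (H.mem h1m)
  · obtain ⟨v, hv⟩ := h
    rw [hv] at hcard
    simp at hcard
    omega

lemma PC.pos_A1 (H : PC verts edges m φ) :
    ∀ d z, z = 2 + 2*d → z < m → ({φ 0, φ 1, φ z} : Finset α) ∈ edges := by
  intro d
  induction d with
  | zero => intro z hz _; rw [hz]; simpa using H.base
  | succ d ih =>
    intro z hz hzm
    rw [hz]
    have hidx : 2 + 2*(d+1) = (2 + 2*d) + 2 := by omega
    rw [hidx]
    have hzm' : 2 + 2*d < m := by omega
    have he := ih (2 + 2*d) rfl hzm'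
    rw [t13] at he
    have he' := H.slide_up (i := 2 + 2*d) (by rw [hz, hidx] at hzm; omega)
      (H.ne (by omega) (by omega) (by omega)) (H.ne (by omega) (by omega) (by omega))
      (H.ne (by omega) (by omega) (by omega)) (H.ne (by omega) (by omega) (by omega))
      (H.ne (by omega) (by omega) (by omega)) (H.ne (by omega) (by omega) (by omega)) he
    rw [← t13] at he'
    exact he'

lemma PC.pos_A2 (H : PC verts edges m φ) :
    ∀ j k, j < k → 2*k < m → ({φ 0, φ (2*j+1), φ (2*k)} : Finset α) ∈ edges := by
  intro j
  induction j with
  | zero =>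
    intro k hk hkm
    have hk1 : 1 ≤ k := hk
    have := H.pos_A1 (k - 1) (2*k) (by omega) hkm
    simpa using this
  | succ j ih =>
    intro k hk hkm
    have he := ih k (by omega) hkm
    rw [t12] at he
    have he' := H.slide_up (i := 2*j+1) (by omega)
      (H.ne (by omega) (by omega) (by omega)) (H.ne (by omega) (by omega) (by omega))
      (H.ne (by omega) (by omega) (by omega)) (H.ne (by omega) (by omega) (by omega))
      (H.ne (by omega) (by omega) (by omega)) (H.ne (by omega) (by omega) (by omega)) he
    rw [← t12] at he'
    have hidx : 2*(j+1)+1 = (2*j+1) + 2 := by omega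
    rw [hidx]
    exact he'

lemma PC.pos (H : PC verts edges m φ) :
    ∀ i j k, i ≤ j → j < k → 2*k < m → ({φ (2*i), φ (2*j+1), φ (2*k)} : Finset α) ∈ edges := by
  intro i
  induction i with
  | zero =>
    intro j k hj hk hkm
    simpa using H.pos_A2 j k hk hkm
  | succ i ih =>
    intro j k hj hk hkm
    have he := ih j k (by omega) hk hkm
    have he' := H.slide_up (i := 2*i) (by omega)
      (H.ne (by omega) (by omega) (by omega)) (H.ne (by omega) (by omega) (by omega))
      (H.ne (by omega) (by omega) (by omega)) (H.ne (by omega) (by omega) (by omega))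
      (H.ne (by omega) (by omega) (by omega)) (H.ne (by omega) (by omega) (by omega)) he
    have hidx : 2*(i+1) = 2*i + 2 := by omega
    rw [hidx]
    exact he'
end OddPathU
namespace OddPathU
variable {α : Type*} [DecidableEq α]
variable {verts : Finset α} {edges : Set (Finset α)} {m : ℕ} {φ : ℕ → α}

lemma PC.fwd_sorted (H : PC verts edges m φ) {x y z : ℕ} (h1 : x < y) (h2 : y < z)
    (hz : z < m) (he : ({φ x, φ y, φ z} : Finset α) ∈ edges) :
    ∃ i j k, i ≤ j ∧ j < k ∧ 2*k < m ∧
      ({φ x, φ y, φ z} : Finset α) = {φ (2*i), φ (2*j+1), φ (2*k)} := by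
  obtain ⟨hx, hy, hz'⟩ := H.neg h1 h2 hz he
  rw [Nat.even_iff] at hx hz'
  rw [Nat.odd_iff] at hy
  obtain ⟨i, rfl⟩ : ∃ i, x = 2*i := ⟨x/2, by omega⟩
  obtain ⟨j, rfl⟩ : ∃ j, y = 2*j+1 := ⟨y/2, by omega⟩
  obtain ⟨k, rfl⟩ : ∃ k, z = 2*k := ⟨z/2, by omega⟩
  exact ⟨i, j, k, by omega, by omega, by omega, rfl⟩

lemma PC.fwd_any (H : PC verts edges m φ) {u v w : ℕ} (hu : u < m) (hv : v < m) (hw : w < m)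
    (huv : u ≠ v) (huw : u ≠ w) (hvw : v ≠ w)
    (he : ({φ u, φ v, φ w} : Finset α) ∈ edges) :
    ∃ i j k, i ≤ j ∧ j < k ∧ 2*k < m ∧
      ({φ u, φ v, φ w} : Finset α) = {φ (2*i), φ (2*j+1), φ (2*k)} := by
  rcases Nat.lt_trichotomy u v with h1 | h1 | h1
  · rcases Nat.lt_trichotomy v w with h2 | h2 | h2
    · exact H.fwd_sorted h1 h2 hw he
    · exact absurd h2 hvw
    · rcases Nat.lt_trichotomy u w with h3 | h3 | h3
      · -- u < w < v
        rw [t23] at he ⊢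
        exact H.fwd_sorted h3 h2 hv he
      · exact absurd h3 huw
      · -- w < u < v
        rw [t13 (φ u) (φ v) (φ w)] at he ⊢
        exact H.fwd_sorted h3 h1 hv he
  · exact absurd h1 huv
  · rcases Nat.lt_trichotomy u w with h2 | h2 | h2
    · -- v < u < w
      rw [t12] at he ⊢
      exact H.fwd_sorted h1 h2 hw he
    · exact absurd h2 huw
    · rcases Nat.lt_trichotomy v w with h3 | h3 | h3
      · -- v < w < u
        rw [t13 (φ u) (φ v) (φ w), t13 (φ w) (φ u) (φ v)] at he ⊢
        exact H.fwd_sorted h3 h2 hu he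
      · exact absurd h3 hvw
      · -- w < v < u
        rw [t13 (φ u) (φ v) (φ w), t23 (φ w) (φ u) (φ v)] at he ⊢
        exact H.fwd_sorted h3 h1 hu he

theorem PC.main (H : PC verts edges m φ) :
    ∀ e : Finset α, e ∈ induceEdges ((Finset.range m).image φ) edges ↔
      ∃ i j k, i ≤ j ∧ j < k ∧ 2 * k < m ∧
        e = {φ (2 * i), φ (2 * j + 1), φ (2 * k)} := by
  intro e
  constructor
  · rintro ⟨he, hsubA⟩
    obtain ⟨a, b, c, hab, hac, hbc, rfl⟩ := Finset.card_eq_three.1 (H.h3 _ he).2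
    have hidx : ∀ x ∈ ({a, b, c} : Finset α), ∃ t, t < m ∧ x = φ t := by
      intro x hx
      obtain ⟨t, ht, hte⟩ := Finset.mem_image.1 (hsubA hx)
      exact ⟨t, Finset.mem_range.1 ht, hte.symm⟩
    obtain ⟨u, hu, rfl⟩ := hidx a (by simp)
    obtain ⟨v, hv, rfl⟩ := hidx b (by simp)
    obtain ⟨w, hw, rfl⟩ := hidx c (by simp)
    have huv : u ≠ v := fun h => hab (by rw [h])
    have huw : u ≠ w := fun h => hac (by rw [h])
    have hvw : v ≠ w := fun h => hbc (by rw [h])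
    obtain ⟨i, j, k, hij, hjk, hkm, heq⟩ := H.fwd_any hu hv hw huv huw hvw he
    exact ⟨i, j, k, hij, hjk, hkm, heq⟩
  · rintro ⟨i, j, k, hij, hjk, hkm, rfl⟩
    refine ⟨H.pos i j k hij hjk hkm, ?_⟩
    intro x hx
    have himg : ∀ t, t < m → φ t ∈ (Finset.range m).image φ :=
      fun t ht => Finset.mem_image.2 ⟨t, Finset.mem_range.2 ht, rfl⟩
    rcases Finset.mem_insert.1 hx with h | hx
    · rw [h]; exact himg _ (by omega)
    · rcases Finset.mem_insert.1 hx with h | hx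
      · rw [h]; exact himg _ (by omega)
      · rw [Finset.mem_singleton.1 hx]; exact himg _ (by omega)

end OddPathU


theorem odd_path_component_induces_U {α : Type*} [DecidableEq α]
    (verts : Finset α) (edges : Set (Finset α)) (h3 : Is3Hypergraph verts edges)
    (hc : IsCritical verts edges) (h5 : 5 ≤ verts.card)
    (hnc : ¬ IsCircular verts edges)
    (m : ℕ) (φ : ℕ → α) (hinj : Set.InjOn φ (Set.Iio m))
    (hsub : (Finset.range m).image φ ⊆ verts)
    (hpath : ∀ i < m, ∀ j < m, (PrimAdj verts edges (φ i) (φ j) ↔ (j = i + 1 ∨ i = j + 1)))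
    (hclosed : ∀ i < m, ∀ w, PrimAdj verts edges (φ i) w → ∃ j < m, w = φ j)
    (hm3 : 3 ≤ m) (hmodd : Odd m) :
    ∀ e : Finset α, e ∈ induceEdges ((Finset.range m).image φ) edges ↔
      ∃ i j k, i ≤ j ∧ j < k ∧ 2 * k < m ∧
        e = {φ (2 * i), φ (2 * j + 1), φ (2 * k)} := by
  exact OddPathU.PC.main ⟨h3, hc, h5, hinj, hsub, hpath, hclosed, hm3, hmodd⟩
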